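/- For every t ∈ [0,1]: t = 8·∑_{j=1}^{∞} sin²((j − 1/2)πt) / ((2j−1)²π²). -/

import Mathlib

open Real Polynomial Set

lemma B2eval (x : ℝ) :
    Polynomial.aeval x (Polynomial.bernoulli 2) = x ^ 2 - x + 1 / 6 := by
  rw [Polynomial.aeval_def, ← Polynomial.eval_map]
  simp [Polynomial.bernoulli_def, Finset.sum_range_succ, _root_.bernoulli_zero,
    _root_.bernoulli_one, Polynomial.eval_smul]
  push_cast
  ring

lemma cos_sum (x : ℝ) (hx : x ∈ Set.Icc (0:ℝ) 1) :
    HasSum (fun n : ℕ => 1 / (n : ℝ) ^ 2 * Real.cos (2 * π * n * x))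
      (π ^ 2 * (x ^ 2 - x + 1 / 6)) := by
  have h := hasSum_one_div_nat_pow_mul_cos (k := 1) one_ne_zero hx
  norm_num [B2eval] at h
  convert h using 2 with n
  · rw [one_div]
  · ring

lemma odd_cos_sum (t : ℝ) (ht : t ∈ Set.Icc (0:ℝ) 1) :
    HasSum (fun j : ℕ => Real.cos ((2 * (j:ℝ) + 1) * π * t) / (2 * (j:ℝ) + 1) ^ 2)
      (π ^ 2 * (1 / 8 - t / 4)) := by
  obtain ⟨h0, h1⟩ := ht
  set f : ℕ → ℝ := fun n => 1 / (n : ℝ) ^ 2 * Real.cos (π * n * t) with hf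
  have htot : HasSum f (π ^ 2 * ((t/2) ^ 2 - t/2 + 1 / 6)) := by
    have := cos_sum (t/2) ⟨by linarith, by linarith⟩
    convert this using 2 with n
    simp only [hf]
    ring_nf
  have heven : HasSum (fun k : ℕ => f (2 * k))
      (π ^ 2 * (t ^ 2 - t + 1 / 6) / 4) := by
    have := (cos_sum t ⟨h0, h1⟩).div_const 4
    convert this using 2 with n
    · rfl
    simp only [hf]
    push_cast
    rcases eq_or_ne (n:ℝ) 0 with h | h
    · simp [h]
    · field_simp
      ring_nf
  have hodd : Summable (fun k : ℕ => f (2 * k + 1)) := by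
    apply htot.summable.comp_injective
    intro a b hab
    dsimp only at hab
    omega
  have hkey := htot.unique (heven.even_add_odd hodd.hasSum)
  have hval : ∑' k, f (2 * k + 1) = π ^ 2 * (1 / 8 - t / 4) := by
    linear_combination -hkey
  have key := hodd.hasSum
  rw [hval] at key
  convert key using 2 with j
  simp only [hf]
  push_cast
  rw [div_eq_mul_inv, mul_comm, ← one_div]
  congr 2
  ring

theorem wiener_mercer_diagonal (t : ℝ) (ht : t ∈ Set.Icc (0 : ℝ) 1) :
    t = 8 * ∑' j : ℕ,
      Real.sin (((j : ℝ) + 1 / 2) * Real.pi * t) ^ 2 /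
        ((2 * (j : ℝ) + 1) ^ 2 * Real.pi ^ 2) := by
  have hpi := Real.pi_pos
  have h0 : HasSum (fun j : ℕ => 1 / (2 * (j:ℝ) + 1) ^ 2) (π ^ 2 * (1 / 8)) := by
    have := odd_cos_sum 0 (by norm_num)
    simp only [mul_zero, Real.cos_zero] at this
    convert this using 2
    norm_num
  have hsumt := odd_cos_sum t ht
  have hd := (h0.sub hsumt).div_const (2 * π ^ 2)
  have hv : (π ^ 2 * (1 / 8) - π ^ 2 * (1 / 8 - t / 4)) / (2 * π ^ 2) = t / 8 := by
    rw [div_eq_iff (by positivity)]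
    ring
  rw [hv] at hd
  have heq : (fun j : ℕ =>
      Real.sin (((j : ℝ) + 1 / 2) * π * t) ^ 2 / ((2 * (j : ℝ) + 1) ^ 2 * π ^ 2))
      = fun j : ℕ => (1 / (2 * (j:ℝ) + 1) ^ 2
          - Real.cos ((2 * (j:ℝ) + 1) * π * t) / (2 * (j:ℝ) + 1) ^ 2) / (2 * π ^ 2) := by
    funext j
    have hsin : Real.sin (((j : ℝ) + 1 / 2) * π * t) ^ 2
        = (1 - Real.cos ((2 * (j:ℝ) + 1) * π * t)) / 2 := by
      rw [Real.sin_sq_eq_half_sub]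
      congr 2
      ring
    rw [hsin, div_sub_div_same, div_div, div_div]
    congr 1
    ring
  rw [← heq] at hd
  rw [hd.tsum_eq]
  ring
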